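/- (Claim 10) Let k ≥ 3 and n ≥ 3 be integers, let A ⊆ [k]^n be a compressed set of the form A = B_{≥1} ∪ D with D ⊆ B_0 and |D| ≥ 2, and let s = max{m(x) : x ∈ D} (so s ≥ 2). Let T be the largest nonempty subset of {1,…,n} under the binary order for which C_T ∩ D ≠ ∅, where C_T = {x ∈ [k]^n : m(x) = s, R_s(x) = T, R_0(x) = ∅}. Then: (1) if T ≠ {1}, then d({1,…,s−1}^n) ⊆ d(A); (2) if T = {1}, then d({1,…,s−1}^n) \ {w} ⊆ d(A), where w is the point with w_1 = 0 and w_j = s−1 for all j ≥ 2. -/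

import Mathlib

open Finset
open scoped Classical

/-- `R_i(x)`: the set of coordinates of `x` equal to `i`.
The ambient alphabet is `[k+1] = {0,…,k}`. -/
noncomputable def rset {k N : ℕ} (x : Fin N → Fin (k + 1)) (i : ℕ) : Finset (Fin N) :=
  Finset.univ.filter fun j => (x j : ℕ) = i

/-- the strict binary order on finite sets of coordinates:
`X <_bin Y` iff `X ≠ Y` and `max (X Δ Y) ∈ Y`. -/
def binLT {N : ℕ} (X Y : Finset (Fin N)) : Prop :=
  ∃ m ∈ Y, m ∉ X ∧ ∀ j : Fin N, ((j ∈ X ∧ j ∉ Y) ∨ (j ∈ Y ∧ j ∉ X)) → j ≤ m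

/-- the strict `≤`-order on `[k+1]^N`: `x < y` iff `|R_0(x)| > |R_0(y)|`, or
`|R_0(x)| = |R_0(y)|` and for the largest `i` with `R_i(x) ≠ R_i(y)` we have
`max (R_i(x) Δ R_i(y)) ∈ R_i(y)`. -/
def plt {k N : ℕ} (x y : Fin N → Fin (k + 1)) : Prop :=
  (rset y 0).card < (rset x 0).card ∨
    ((rset x 0).card = (rset y 0).card ∧
      ∃ i : ℕ, binLT (rset x i) (rset y i) ∧ ∀ j : ℕ, i < j → rset x j = rset y j)

/-- the `≤`-order on `[k+1]^N`. -/
def ple {k N : ℕ} (x y : Fin N → Fin (k + 1)) : Prop := x = y ∨ plt x y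

/-- `B` is an initial segment of the `≤`-order. -/
def isInitSeg {k N : ℕ} (B : Finset (Fin N → Fin (k + 1))) : Prop :=
  ∀ y ∈ B, ∀ x, ple x y → x ∈ B

/-- the `d`-shadow: all points obtained from a point of `A` by flipping one
nonzero coordinate to `0`. -/
noncomputable def dShadow {k N : ℕ} (A : Finset (Fin N → Fin (k + 1))) :
    Finset (Fin N → Fin (k + 1)) :=
  A.biUnion fun x =>
    (Finset.univ.filter fun i => x i ≠ 0).image fun i => Function.update x i 0

/-- the initial segment of the `≤`-order on `[k+1]^N` of cardinality `m`. -/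
noncomputable def initSeg (k N m : ℕ) : Finset (Fin N → Fin (k + 1)) :=
  Finset.univ.filter fun x => (Finset.univ.filter fun y => ple y x).card ≤ m

/-- the `C_s`-compression of `A ⊆ [k+1]^(n+1)`: replace each slice
`A_{s,t} = {y : t_s y ∈ A}` by the initial segment of the same size. -/
noncomputable def compress {k n : ℕ} (s : Fin (n + 1)) (A : Finset (Fin (n + 1) → Fin (k + 1))) :
    Finset (Fin (n + 1) → Fin (k + 1)) :=
  Finset.univ.biUnion fun t : Fin (k + 1) =>
    (initSeg k n
        (Finset.univ.filter fun y : Fin n → Fin (k + 1) => s.insertNth t y ∈ A).card).image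
      fun y => s.insertNth t y

/-- `A` is compressed if every `C_s`-compression fixes it. -/
def IsCompressed {k n : ℕ} (A : Finset (Fin (n + 1) → Fin (k + 1))) : Prop :=
  ∀ s : Fin (n + 1), compress s A = A

/-- `B_r`: points with exactly `r` zero coordinates. -/
noncomputable def Bexact (k N r : ℕ) : Finset (Fin N → Fin (k + 1)) :=
  Finset.univ.filter fun x => (rset x 0).card = r

/-- `B_{≥r}`: points with at least `r` zero coordinates. -/
noncomputable def Bge (k N r : ℕ) : Finset (Fin N → Fin (k + 1)) :=
  Finset.univ.filter fun x => r ≤ (rset x 0).card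

/-- `m(x)`: the largest coordinate value of `x`. -/
noncomputable def mval {k N : ℕ} (x : Fin N → Fin (k + 1)) : ℕ :=
  Finset.univ.sup fun i => (x i : ℕ)

/-- the class `C_X`: points with maximal coordinate `s`, attained exactly on `X`,
and exactly `r` zero coordinates. -/
noncomputable def classSet (k N s r : ℕ) (X : Finset (Fin N)) : Finset (Fin N → Fin (k + 1)) :=
  Finset.univ.filter fun x => mval x = s ∧ rset x s = X ∧ (rset x 0).card = r

/-- `[m]^N = {0,…,m−1}^N`. -/
noncomputable def box (k N m : ℕ) : Finset (Fin N → Fin (k + 1)) :=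
  Finset.univ.filter fun x => ∀ i, (x i : ℕ) < m

/-- `{1,…,s−1}^N`. -/
noncomputable def box1 (k N s : ℕ) : Finset (Fin N → Fin (k + 1)) :=
  Finset.univ.filter fun x => ∀ i, 1 ≤ (x i : ℕ) ∧ (x i : ℕ) ≤ s - 1

/-- `B` is a down-set. -/
def isDownSet {k N : ℕ} (B : Finset (Fin N → Fin (k + 1))) : Prop :=
  ∀ y ∈ B, ∀ x : Fin N → Fin (k + 1), (∀ j, (x j : ℕ) ≤ (y j : ℕ)) → x ∈ B

section Aux

variable {k N : ℕ}

lemma mem_rset {x : Fin N → Fin (k + 1)} {i : ℕ} {j : Fin N} :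
    j ∈ rset x i ↔ (x j : ℕ) = i := by simp [rset]

lemma rset_zero_empty {x : Fin N → Fin (k + 1)} (h : ∀ j, x j ≠ 0) : rset x 0 = ∅ := by
  ext j
  simp only [mem_rset, Finset.notMem_empty, iff_false]
  intro h0
  exact h j (Fin.ext (by simpa using h0))

lemma rset_empty_of_big {x : Fin N → Fin (k + 1)} {L : ℕ} (h : ∀ l, (x l : ℕ) ≤ L)
    {j : ℕ} (hj : L < j) : rset x j = ∅ := by
  ext l
  simp only [mem_rset, Finset.notMem_empty, iff_false]
  intro h0
  exact absurd (h0 ▸ h l) (not_le.2 hj)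

lemma binLT_trans {X Y Z : Finset (Fin N)} (h1 : binLT X Y) (h2 : binLT Y Z) : binLT X Z := by
  obtain ⟨m1, hm1Y, hm1X, hb1⟩ := h1
  obtain ⟨m2, hm2Z, hm2Y, hb2⟩ := h2
  rcases le_or_gt m1 m2 with h | h
  · refine ⟨m2, hm2Z, ?_, ?_⟩
    · intro hm2X
      have h21 : m2 ≤ m1 := hb1 m2 (Or.inl ⟨hm2X, hm2Y⟩)
      have : m2 = m1 := le_antisymm h21 h
      exact hm2Y (this ▸ hm1Y)
    · intro j hj
      rcases hj with ⟨hjX, hjZ⟩ | ⟨hjZ, hjX⟩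
      · by_cases hY : j ∈ Y
        · exact hb2 j (Or.inl ⟨hY, hjZ⟩)
        · exact le_trans (hb1 j (Or.inl ⟨hjX, hY⟩)) h
      · by_cases hY : j ∈ Y
        · exact le_trans (hb1 j (Or.inr ⟨hY, hjX⟩)) h
        · exact hb2 j (Or.inr ⟨hjZ, hY⟩)
  · refine ⟨m1, ?_, hm1X, ?_⟩
    · by_cases hZ : m1 ∈ Z
      · exact hZ
      · exact absurd (hb2 m1 (Or.inl ⟨hm1Y, hZ⟩)) (not_le.2 h)
    · intro j hj
      rcases hj with ⟨hjX, hjZ⟩ | ⟨hjZ, hjX⟩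
      · by_cases hY : j ∈ Y
        · exact le_trans (hb2 j (Or.inl ⟨hY, hjZ⟩)) h.le
        · exact hb1 j (Or.inl ⟨hjX, hY⟩)
      · by_cases hY : j ∈ Y
        · exact hb1 j (Or.inr ⟨hY, hjX⟩)
        · exact le_trans (hb2 j (Or.inr ⟨hjZ, hY⟩)) h.le

lemma binLT_of_ssubset {X Y : Finset (Fin N)} (h : X ⊂ Y) : binLT X Y := by
  have hne : (Y \ X).Nonempty := by
    rw [Finset.sdiff_nonempty]
    exact fun hs => h.2 hs
  refine ⟨(Y \ X).max' hne, ?_, ?_, ?_⟩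
  · exact (Finset.mem_sdiff.1 ((Y \ X).max'_mem hne)).1
  · exact (Finset.mem_sdiff.1 ((Y \ X).max'_mem hne)).2
  · intro j hj
    rcases hj with ⟨hjX, hjY⟩ | ⟨hjY, hjX⟩
    · exact absurd (h.1 hjX) hjY
    · exact Finset.le_max' _ j (Finset.mem_sdiff.2 ⟨hjY, hjX⟩)

lemma plt_trans {a b c : Fin N → Fin (k + 1)} (h1 : plt a b) (h2 : plt b c) : plt a c := by
  rcases h1 with h1 | ⟨e1, i1, hb1, hhi1⟩
  · rcases h2 with h2 | ⟨e2, _⟩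
    · exact Or.inl (h2.trans h1)
    · exact Or.inl (e2 ▸ h1)
  · rcases h2 with h2 | ⟨e2, i2, hb2, hhi2⟩
    · exact Or.inl (by rwa [e1])
    · refine Or.inr ⟨e1.trans e2, ?_⟩
      rcases lt_trichotomy i1 i2 with h | h | h
      · exact ⟨i2, by rwa [hhi1 i2 h], fun j hj => (hhi1 j (h.trans hj)).trans (hhi2 j hj)⟩
      · subst h
        exact ⟨i1, binLT_trans hb1 hb2, fun j hj => (hhi1 j hj).trans (hhi2 j hj)⟩
      · exact ⟨i1, by rwa [← hhi2 i1 h], fun j hj => (hhi1 j hj).trans (hhi2 j (h.trans hj))⟩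

lemma ple_trans {a b c : Fin N → Fin (k + 1)} (h1 : ple a b) (h2 : ple b c) : ple a c := by
  rcases h1 with rfl | h1
  · exact h2
  rcases h2 with rfl | h2
  · exact Or.inr h1
  · exact Or.inr (plt_trans h1 h2)

lemma plt_of_level {v y : Fin N → Fin (k + 1)} (L : ℕ)
    (hv0 : ∀ j, v j ≠ 0) (hy0 : ∀ j, y j ≠ 0)
    (hvL : ∀ j, (v j : ℕ) ≤ L) (hyL : ∀ j, (y j : ℕ) ≤ L)
    (hb : binLT (rset v L) (rset y L)) : plt v y := by
  refine Or.inr ⟨by rw [rset_zero_empty hv0, rset_zero_empty hy0], L, hb, fun j hj => ?_⟩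
  rw [rset_empty_of_big hvL hj, rset_empty_of_big hyL hj]

end Aux
section Slice

variable {k n : ℕ} {A : Finset (Fin (n + 1) → Fin (k + 1))}

lemma slice_mem (hA : IsCompressed A) (r : Fin (n + 1)) (t : Fin (k + 1))
    {y z : Fin n → Fin (k + 1)} (hy : r.insertNth t y ∈ A) (hzy : ple z y) :
    r.insertNth t z ∈ A := by
  have hAr := hA r
  rw [← hAr] at hy ⊢
  rw [compress, Finset.mem_biUnion] at hy ⊢
  obtain ⟨t', -, hw⟩ := hy
  rw [Finset.mem_image] at hw
  obtain ⟨w, hwmem, hweq⟩ := hw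
  have ht' : t' = t := by
    have h := congrFun hweq r
    simpa using h
  rw [ht'] at hwmem hweq
  have hwy : w = y := by
    funext j
    have h := congrFun hweq (r.succAbove j)
    simpa using h
  subst hwy
  refine ⟨t, Finset.mem_univ _, Finset.mem_image.2 ⟨z, ?_, rfl⟩⟩
  rw [initSeg, Finset.mem_filter] at hwmem ⊢
  refine ⟨Finset.mem_univ _, le_trans (Finset.card_le_card ?_) hwmem.2⟩
  intro u hu
  rw [Finset.mem_filter] at hu ⊢
  exact ⟨Finset.mem_univ _, ple_trans hu.2 hzy⟩

/-- generic membership step: if `b ∈ A`, `x'` agrees with `b` at `r`, and the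
rest of `x'` is `≤` the rest of `b`, then `x' ∈ A`. -/
lemma gen_mem (hA : IsCompressed A) {b x' : Fin (n + 1) → Fin (k + 1)} (r : Fin (n + 1))
    (hb : b ∈ A) (hr : x' r = b r)
    (hple : ple (Fin.removeNth r x') (Fin.removeNth r b)) : x' ∈ A := by
  have h1 : r.insertNth (b r) (Fin.removeNth r b) = b := Fin.insertNth_self_removeNth r b
  have h2 := slice_mem hA r (b r) (by rw [h1]; exact hb) hple
  rw [Fin.insertNth_removeNth] at h2
  rwa [← hr, Function.update_eq_self] at h2

end Slice
section Core

variable {k n s : ℕ}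

lemma core (hk : 2 ≤ k) (hn : 2 ≤ n)
    (A D : Finset (Fin (n + 1) → Fin (k + 1)))
    (hDsub : D ⊆ Bexact k (n + 1) 0) (hAeq : A = Bge k (n + 1) 1 ∪ D)
    (hA : IsCompressed A)
    (T : Finset (Fin (n + 1))) (hTne : T.Nonempty)
    (x₀ : Fin (n + 1) → Fin (k + 1)) (hx₀D : x₀ ∈ D)
    (hx₀m : mval x₀ = s) (hx₀T : rset x₀ s = T)
    (i : Fin (n + 1)) (x : Fin (n + 1) → Fin (k + 1))
    (hx : ∀ l, 1 ≤ (x l : ℕ) ∧ (x l : ℕ) ≤ s - 1)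
    (hexc : T = {i} → (∀ l, l ≠ i → (x l : ℕ) = s - 1) → i ≠ 0) :
    ∃ t : Fin (k + 1), t ≠ 0 ∧ Function.update x i t ∈ A := by
  classical
  -- basic facts
  have hDA : D ⊆ A := by rw [hAeq]; exact Finset.subset_union_right
  have hx₀A : x₀ ∈ A := hDA hx₀D
  have hx₀0 : ∀ l, x₀ l ≠ 0 := by
    intro l hl
    have hc : (rset x₀ 0).card = 0 := by
      have h := hDsub hx₀D
      simpa [Bexact] using h
    have he : rset x₀ 0 = ∅ := Finset.card_eq_zero.1 hc
    have : l ∈ rset x₀ 0 := mem_rset.2 (by rw [hl]; rfl)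
    simp [he] at this
  have hx₀le : ∀ l, (x₀ l : ℕ) ≤ s := by
    intro l
    have h := Finset.le_sup (f := fun j => ((x₀ j : ℕ))) (Finset.mem_univ l)
    rwa [show Finset.univ.sup (fun j => ((x₀ j : ℕ))) = s from hx₀m] at h
  have hTs : ∀ l, l ∈ T ↔ (x₀ l : ℕ) = s := by
    intro l; rw [← hx₀T]; exact mem_rset
  have hs2 : 2 ≤ s := by
    have h := hx 0
    omega
  have hsk : s ≤ k := by
    obtain ⟨p, hp⟩ := hTne
    have := (hTs p).1 hp
    have h2 := (x₀ p).isLt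
    omega
  have hxne0 : ∀ l, x l ≠ 0 := by
    intro l hl
    have := (hx l).1
    rw [hl] at this
    simp at this
  -- the distinguished values
  set vs1 : Fin (k + 1) := ⟨s - 1, by omega⟩ with hvs1
  set v1 : Fin (k + 1) := ⟨1, by omega⟩ with hv1
  have hv1ne : v1 ≠ 0 := by
    intro h
    have := congrArg Fin.val h
    simp [hv1] at this
  -- base membership: inserting any small vector at a non-`i` coordinate of `x₀`
  have hbase : ∀ q p : Fin (n + 1), p ≠ q → p ∈ T → ∀ z : Fin n → Fin (k + 1),
      (∀ j, 1 ≤ (z j : ℕ)) → (∀ j, (z j : ℕ) ≤ s - 1) → q.insertNth (x₀ q) z ∈ A := by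
    intro q p hpq hpT z h1 h2
    have heq : q.insertNth (x₀ q) (Fin.removeNth q x₀) = x₀ := Fin.insertNth_self_removeNth q x₀
    refine slice_mem hA q (x₀ q) (by rw [heq]; exact hx₀A) (Or.inr ?_)
    refine plt_of_level s ?_ ?_ ?_ ?_ ?_
    · intro j hj
      have := h1 j
      rw [hj] at this; simp at this
    · intro j; exact hx₀0 _
    · intro j; have := h2 j; omega
    · intro j; exact hx₀le _
    · refine binLT_of_ssubset ?_
      rw [rset_empty_of_big (L := s - 1) h2 (by omega), Finset.empty_ssubset]
      obtain ⟨j, hj⟩ := Fin.exists_succAbove_eq hpq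
      refine ⟨j, mem_rset.2 ?_⟩
      show ((Fin.removeNth q x₀) j : ℕ) = s
      simp only [Fin.removeNth, hj]
      exact (hTs p).1 hpT
  by_cases hTi : T = {i}
  · -- Case B : T = {i}
    have hiT : i ∈ T := by rw [hTi]; exact Finset.mem_singleton_self i
    have hx₀i : (x₀ i : ℕ) = s := (hTs i).1 hiT
    have hx₀lt : ∀ l, l ≠ i → (x₀ l : ℕ) ≤ s - 1 := by
      intro l hl
      have h1 := hx₀le l
      have h2 : ¬((x₀ l : ℕ) = s) := by
        intro h
        have := (hTs l).2 h
        rw [hTi, Finset.mem_singleton] at this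
        exact hl this
      omega
    have hvalpos : ∀ a : Fin (k + 1), a ≠ 0 → 1 ≤ (a : ℕ) := by
      intro a ha
      rcases Nat.eq_zero_or_pos (a : ℕ) with h | h
      · exact absurd (Fin.ext (by simp [h])) ha
      · exact h
    have hvs1val : ((vs1 : Fin (k + 1)) : ℕ) = s - 1 := rfl
    have hv1val : ((v1 : Fin (k + 1)) : ℕ) = 1 := rfl
    have hvs1ne : vs1 ≠ 0 := by
      intro h
      have := congrArg Fin.val h
      rw [hvs1val] at this
      simp at this
      omega
    by_cases htop : ∀ l, l ≠ i → (x l : ℕ) = s - 1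
    · -- top subcase : all other coordinates of `x` equal `s - 1`
      have hi0 : i ≠ 0 := hexc hTi htop
      by_cases hs3 : 3 ≤ s
      · -- main top case
        have hnz : NeZero n := ⟨by omega⟩
        have h2n : (2 : ℕ) < n + 1 := by omega
        have h1n : (1 : ℕ) < n + 1 := by omega
        set r : Fin (n + 1) := if i = ⟨1, h1n⟩ then ⟨2, h2n⟩ else ⟨1, h1n⟩ with hr
        have hr0 : r ≠ 0 := by
          rw [hr]; split
          · intro h; have := congrArg Fin.val h; simp at this
          · intro h; have := congrArg Fin.val h; simp at this
        have hri : r ≠ i := by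
          rw [hr]; split
          · rename_i h
            rw [h]
            intro hh; have := congrArg Fin.val hh; simp at this
          · rename_i h
            exact fun hh => h hh.symm
        set B : Fin (n + 1) → Fin (k + 1) := fun l => if l = 0 then x₀ 0 else vs1 with hB
        have hBA : B ∈ A := by
          have h := hbase 0 i hi0 hiT (Fin.removeNth 0 B) ?_ ?_
          · have heq : (0 : Fin (n + 1)).insertNth (x₀ 0) (Fin.removeNth 0 B) = B := by
              have hq : x₀ 0 = B 0 := by rw [hB]; simp
              rw [hq]
              exact Fin.insertNth_self_removeNth 0 B
            rwa [heq] at h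
          · intro j
            have hne : (0 : Fin (n + 1)).succAbove j ≠ 0 := Fin.succAbove_ne 0 j
            simp only [Fin.removeNth, hB, if_neg hne, hvs1val]
            omega
          · intro j
            have hne : (0 : Fin (n + 1)).succAbove j ≠ 0 := Fin.succAbove_ne 0 j
            simp only [Fin.removeNth, hB, if_neg hne, hvs1val]
            omega
        refine ⟨v1, hv1ne, ?_⟩
        refine gen_mem hA r hBA ?_ (Or.inr ?_)
        · rw [Function.update_of_ne hri]
          have h1 : (x r : ℕ) = s - 1 := htop r hri
          have h2 : x r = vs1 := Fin.ext (by rw [h1, hvs1val])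
          rw [h2, hB]
          simp only [if_neg hr0]
        · refine plt_of_level (s - 1) ?_ ?_ ?_ ?_ ?_
          · intro j
            simp only [Fin.removeNth]
            rcases eq_or_ne (r.succAbove j) i with he | he
            · rw [he, Function.update_self]; exact hv1ne
            · rw [Function.update_of_ne he]; exact hxne0 _
          · intro j
            simp only [Fin.removeNth, hB]
            split
            · exact hx₀0 _
            · exact hvs1ne
          · intro j
            simp only [Fin.removeNth]
            rcases eq_or_ne (r.succAbove j) i with he | he
            · rw [he, Function.update_self, hv1val]; omega
            · rw [Function.update_of_ne he]; exact (hx _).2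
          · intro j
            simp only [Fin.removeNth, hB]
            split
            · exact hx₀lt 0 (Ne.symm hi0)
            · rw [hvs1val]
          · obtain ⟨it, hit⟩ := Fin.exists_succAbove_eq (Ne.symm hri)
            refine ⟨it, ?_, ?_, ?_⟩
            · refine mem_rset.2 ?_
              simp only [Fin.removeNth, hit, hB, if_neg hi0, hvs1val]
            · intro hmem
              have hval := mem_rset.1 hmem
              have hrw : Fin.removeNth r (Function.update x i v1) it = v1 := by
                simp only [Fin.removeNth]
                rw [hit, Function.update_self]
              rw [hrw, hv1val] at hval
              omega
            · intro j hj
              rcases hj with ⟨hjX, hjY⟩ | ⟨hjY, hjX⟩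
              · by_cases h0 : r.succAbove j = 0
                · have hj0 : j = 0 := Fin.succAbove_right_injective
                    (by rw [h0, Fin.succAbove_ne_zero_zero hr0])
                  rw [hj0]
                  exact Fin.zero_le it
                · exact absurd (mem_rset.2 (by
                    simp only [Fin.removeNth, hB, if_neg h0, hvs1val])) hjY
              · rcases eq_or_ne (r.succAbove j) i with he | he
                · have : j = it := Fin.succAbove_right_injective (by rw [he, hit])
                  rw [this]
                · exact absurd (mem_rset.2 (by
                    simp only [Fin.removeNth]
                    rw [Function.update_of_ne he]
                    exact htop _ he)) hjX
      · -- s = 2 : the target is `x₀` itself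
        refine ⟨x₀ i, hx₀0 i, ?_⟩
        have heq : Function.update x i (x₀ i) = x₀ := by
          funext l
          rcases eq_or_ne l i with rfl | hl
          · rw [Function.update_self]
          · rw [Function.update_of_ne hl]
            have h1 := htop l hl
            have h2 := hx₀lt l hl
            have h3 := hvalpos _ (hx₀0 l)
            exact Fin.ext (by omega)
        rw [heq]
        exact hx₀A
    · -- not top : some other coordinate of `x` is below `s - 1`
      push_neg at htop
      obtain ⟨p, hpi, hpval⟩ := htop
      have hxp2 : (x p : ℕ) ≤ s - 2 := by
        have h1 := (hx p).2
        omega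
      have hs3 : 3 ≤ s := by
        have h1 := (hx p).1
        omega
      by_cases hqex : ∃ q, q ≠ i ∧ q ≠ p ∧ (x q : ℕ) ≠ s - 1
      · -- case (γ) : two coordinates strictly below `s - 1`
        obtain ⟨q, hqi, hqp, hqval⟩ := hqex
        have hpq : p ≠ q := Ne.symm hqp
        set B : Fin (n + 1) → Fin (k + 1) :=
          fun l => if l = q then x₀ q else if l = p then x p else vs1 with hB
        have hBA : B ∈ A := by
          have h := hbase q i (Ne.symm hqi) hiT (Fin.removeNth q B) ?_ ?_
          · have heq : q.insertNth (x₀ q) (Fin.removeNth q B) = B := by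
              rw [show x₀ q = B q from by rw [hB]; simp]
              exact Fin.insertNth_self_removeNth q B
            rwa [heq] at h
          · intro j
            have hne : q.succAbove j ≠ q := Fin.succAbove_ne q j
            simp only [Fin.removeNth, hB, if_neg hne]
            split
            · exact (hx p).1
            · rw [hvs1val]; omega
          · intro j
            have hne : q.succAbove j ≠ q := Fin.succAbove_ne q j
            simp only [Fin.removeNth, hB, if_neg hne]
            split
            · exact (hx p).2
            · rw [hvs1val]
        refine ⟨v1, hv1ne, ?_⟩
        refine gen_mem hA p hBA ?_ (Or.inr ?_)
        · rw [Function.update_of_ne hpi, hB]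
          simp [hpq]
        · refine plt_of_level (s - 1) ?_ ?_ ?_ ?_ ?_
          · intro j
            simp only [Fin.removeNth]
            rcases eq_or_ne (p.succAbove j) i with he | he
            · rw [he, Function.update_self]; exact hv1ne
            · rw [Function.update_of_ne he]; exact hxne0 _
          · intro j
            simp only [Fin.removeNth, hB]
            split
            · exact hx₀0 _
            · split
              · exact hxne0 _
              · exact hvs1ne
          · intro j
            simp only [Fin.removeNth]
            rcases eq_or_ne (p.succAbove j) i with he | he
            · rw [he, Function.update_self, hv1val]; omega
            · rw [Function.update_of_ne he]; exact (hx _).2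
          · intro j
            simp only [Fin.removeNth, hB]
            split
            · exact hx₀lt q hqi
            · split
              · exact (hx p).2
              · rw [hvs1val]
          · have hsub : rset (Fin.removeNth p (Function.update x i v1)) (s - 1)
                ⊆ rset (Fin.removeNth p B) (s - 1) := by
              intro j hj
              have hval := mem_rset.1 hj
              have hlp : p.succAbove j ≠ p := Fin.succAbove_ne p j
              simp only [Fin.removeNth] at hval
              rcases eq_or_ne (p.succAbove j) i with he | he
              · rw [he, Function.update_self, hv1val] at hval
                omega
              · rw [Function.update_of_ne he] at hval
                rcases eq_or_ne (p.succAbove j) q with he2 | he2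
                · rw [he2] at hval
                  exact absurd hval hqval
                · refine mem_rset.2 ?_
                  simp only [Fin.removeNth, hB, if_neg he2, if_neg hlp, hvs1val]
            obtain ⟨it, hit⟩ := Fin.exists_succAbove_eq (Ne.symm hpi)
            refine binLT_of_ssubset ((Finset.ssubset_iff_of_subset hsub).2 ⟨it, ?_, ?_⟩)
            · refine mem_rset.2 ?_
              simp only [Fin.removeNth, hit, hB, if_neg (Ne.symm hqi), if_neg (Ne.symm hpi), hvs1val]
            · intro hmem
              have hval := mem_rset.1 hmem
              have hrw : Fin.removeNth p (Function.update x i v1) it = v1 := by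
                simp only [Fin.removeNth]
                rw [hit, Function.update_self]
              rw [hrw, hv1val] at hval
              omega
      · -- case (β) : exactly one coordinate strictly below `s - 1`
        push_neg at hqex
        have hrex : ∃ r : Fin (n + 1), r ≠ i ∧ r ≠ p := by
          by_contra h
          push_neg at h
          have hsub : (Finset.univ : Finset (Fin (n + 1))) ⊆ {i, p} := by
            intro r _
            rcases eq_or_ne r i with rfl | hri
            · exact Finset.mem_insert_self _ _
            · rw [h r hri]
              exact Finset.mem_insert.2 (Or.inr (Finset.mem_singleton_self p))
          have hc := Finset.card_le_card hsub
          rw [Finset.card_univ, Fintype.card_fin] at hc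
          have h2 : ({i, p} : Finset (Fin (n + 1))).card ≤ 2 :=
            (Finset.card_insert_le _ _).trans (by simp)
          omega
        obtain ⟨r, hri, hrp⟩ := hrex
        set B : Fin (n + 1) → Fin (k + 1) := fun l => if l = p then x₀ p else vs1 with hB
        have hBA : B ∈ A := by
          have h := hbase p i (Ne.symm hpi) hiT (Fin.removeNth p B) ?_ ?_
          · have heq : p.insertNth (x₀ p) (Fin.removeNth p B) = B := by
              rw [show x₀ p = B p from by rw [hB]; simp]
              exact Fin.insertNth_self_removeNth p B
            rwa [heq] at h
          · intro j
            have hne : p.succAbove j ≠ p := Fin.succAbove_ne p j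
            simp only [Fin.removeNth, hB, if_neg hne]
            omega
          · intro j
            have hne : p.succAbove j ≠ p := Fin.succAbove_ne p j
            simp only [Fin.removeNth, hB, if_neg hne]
            omega
        refine ⟨v1, hv1ne, ?_⟩
        refine gen_mem hA r hBA ?_ (Or.inr ?_)
        · rw [Function.update_of_ne hri, hB]
          simp only [if_neg hrp]
          exact Fin.ext (by rw [hqex r hri hrp, hvs1val])
        · refine plt_of_level (s - 1) ?_ ?_ ?_ ?_ ?_
          · intro j
            simp only [Fin.removeNth]
            rcases eq_or_ne (r.succAbove j) i with he | he
            · rw [he, Function.update_self]; exact hv1ne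
            · rw [Function.update_of_ne he]; exact hxne0 _
          · intro j
            simp only [Fin.removeNth, hB]
            split
            · exact hx₀0 _
            · exact hvs1ne
          · intro j
            simp only [Fin.removeNth]
            rcases eq_or_ne (r.succAbove j) i with he | he
            · rw [he, Function.update_self, hv1val]; omega
            · rw [Function.update_of_ne he]; exact (hx _).2
          · intro j
            simp only [Fin.removeNth, hB]
            split
            · exact hx₀lt p hpi
            · rw [hvs1val]
          · have hsub : rset (Fin.removeNth r (Function.update x i v1)) (s - 1)
                ⊆ rset (Fin.removeNth r B) (s - 1) := by
              intro j hj
              have hval := mem_rset.1 hj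
              simp only [Fin.removeNth] at hval
              rcases eq_or_ne (r.succAbove j) i with he | he
              · rw [he, Function.update_self, hv1val] at hval
                omega
              · rw [Function.update_of_ne he] at hval
                rcases eq_or_ne (r.succAbove j) p with he2 | he2
                · rw [he2] at hval
                  exact absurd hval hpval
                · refine mem_rset.2 ?_
                  simp only [Fin.removeNth, hB, if_neg he2, hvs1val]
            obtain ⟨it, hit⟩ := Fin.exists_succAbove_eq (Ne.symm hri)
            refine binLT_of_ssubset ((Finset.ssubset_iff_of_subset hsub).2 ⟨it, ?_, ?_⟩)
            · refine mem_rset.2 ?_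
              simp only [Fin.removeNth, hit, hB, if_neg (Ne.symm hpi), hvs1val]
            · intro hmem
              have hval := mem_rset.1 hmem
              have hrw : Fin.removeNth r (Function.update x i v1) it = v1 := by
                simp only [Fin.removeNth]
                rw [hit, Function.update_self]
              rw [hrw, hv1val] at hval
              omega
  · -- Case A : `T ≠ {i}`, use the `i`-slice of `x₀` directly
    have hpexists : ∃ p, p ∈ T ∧ p ≠ i := by
      by_contra h
      push_neg at h
      apply hTi
      apply Finset.ext
      intro l
      simp only [Finset.mem_singleton]
      constructor
      · exact h l
      · rintro rfl
        obtain ⟨p₀, hp₀⟩ := hTne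
        have := h p₀ hp₀
        rwa [this] at hp₀
    obtain ⟨p, hpT, hpi⟩ := hpexists
    refine ⟨x₀ i, hx₀0 i, ?_⟩
    refine gen_mem hA i hx₀A (Function.update_self i (x₀ i) x) (Or.inr ?_)
    rw [Fin.removeNth_update]
    refine plt_of_level s ?_ ?_ ?_ ?_ ?_
    · intro j; exact hxne0 _
    · intro j; exact hx₀0 _
    · intro j; have := (hx (i.succAbove j)).2; simp only [Fin.removeNth]; omega
    · intro j; exact hx₀le _
    · refine binLT_of_ssubset ?_
      rw [rset_empty_of_big (L := s - 1)
        (fun l => by simpa [Fin.removeNth] using (hx (i.succAbove l)).2) (by omega),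
        Finset.empty_ssubset]
      obtain ⟨j, hj⟩ := Fin.exists_succAbove_eq hpi
      refine ⟨j, mem_rset.2 ?_⟩
      show ((Fin.removeNth i x₀) j : ℕ) = s
      simp only [Fin.removeNth, hj]
      exact (hTs p).1 hpT

end Core
/-- **Claim 10.** Let `k ≥ 3`, `n ≥ 3`, let `A = B_{≥1} ∪ D ⊆ [k]^n` be compressed with
`D ⊆ B_0`, `|D| ≥ 2`, and let `s = max {m(x) : x ∈ D}`. Let `T` be the largest nonempty
set under the binary order with `C_T ∩ D ≠ ∅`. Then (1) if `T ≠ {1}` then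
`d({1,…,s−1}^n) ⊆ d(A)`, and (2) if `T = {1}` then
`d({1,…,s−1}^n) \ {w} ⊆ d(A)`, where `w = 0 ((n−1)·(s−1))`.
(Dimension `n ≥ 3` is rendered as `n + 1` with `n ≥ 2`; the first index is `0 : Fin (n+1)`;
alphabet `[k]` with `k ≥ 3` as `Fin (k+1)` with `k ≥ 2`.) -/
theorem claim10 (k n s : ℕ) (hk : 2 ≤ k) (hn : 2 ≤ n)
    (A D : Finset (Fin (n + 1) → Fin (k + 1)))
    (hDsub : D ⊆ Bexact k (n + 1) 0) (hAeq : A = Bge k (n + 1) 1 ∪ D)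
    (hDcard : 2 ≤ D.card) (hA : IsCompressed A)
    (hs1 : ∃ x ∈ D, mval x = s) (hs2 : ∀ x ∈ D, mval x ≤ s)
    (T : Finset (Fin (n + 1))) (hTne : T.Nonempty)
    (hT : (classSet k (n + 1) s 0 T ∩ D).Nonempty)
    (hTmax : ∀ S : Finset (Fin (n + 1)), S.Nonempty →
      (classSet k (n + 1) s 0 S ∩ D).Nonempty → S = T ∨ binLT S T) :
    (T ≠ {0} → dShadow (box1 k (n + 1) s) ⊆ dShadow A) ∧
    (T = {0} → ∀ z ∈ dShadow (box1 k (n + 1) s),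
      z ≠ (fun j : Fin (n + 1) => if j = 0 then (0 : Fin (k + 1)) else (Fin.ofNat (k + 1) (s - 1))) →
        z ∈ dShadow A) := by
  classical
  obtain ⟨x₀, hx₀⟩ := hT
  rw [Finset.mem_inter] at hx₀
  obtain ⟨hx₀C, hx₀D⟩ := hx₀
  rw [classSet, Finset.mem_filter] at hx₀C
  obtain ⟨-, hx₀m, hx₀T, -⟩ := hx₀C
  have hsk : s ≤ k := by
    rw [← hx₀m, mval]
    exact Finset.sup_le fun l _ => Fin.is_le _
  have key : ∀ (i : Fin (n + 1)) (x : Fin (n + 1) → Fin (k + 1)),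
      (∀ l, 1 ≤ (x l : ℕ) ∧ (x l : ℕ) ≤ s - 1) →
      (T = {i} → (∀ l, l ≠ i → (x l : ℕ) = s - 1) → i ≠ 0) →
      Function.update x i 0 ∈ dShadow A := by
    intro i x hxbox hexc
    obtain ⟨t, ht0, htA⟩ := core hk hn A D hDsub hAeq hA T hTne x₀ hx₀D hx₀m hx₀T i x hxbox hexc
    rw [dShadow, Finset.mem_biUnion]
    refine ⟨Function.update x i t, htA, ?_⟩
    rw [Finset.mem_image]
    refine ⟨i, Finset.mem_filter.2 ⟨Finset.mem_univ _,
      by rw [Function.update_self]; exact ht0⟩, ?_⟩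
    funext l
    rcases eq_or_ne l i with rfl | hl
    · rw [Function.update_self, Function.update_self]
    · rw [Function.update_of_ne hl, Function.update_of_ne hl, Function.update_of_ne hl]
  have unpack : ∀ z ∈ dShadow (box1 k (n + 1) s),
      ∃ (i : Fin (n + 1)) (x : Fin (n + 1) → Fin (k + 1)),
        (∀ l, 1 ≤ (x l : ℕ) ∧ (x l : ℕ) ≤ s - 1) ∧ Function.update x i 0 = z := by
    intro z hz
    rw [dShadow, Finset.mem_biUnion] at hz
    obtain ⟨x, hxbox, hzim⟩ := hz
    rw [Finset.mem_image] at hzim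
    obtain ⟨i, -, hzi⟩ := hzim
    rw [box1, Finset.mem_filter] at hxbox
    exact ⟨i, x, hxbox.2, hzi⟩
  constructor
  · intro hT0 z hz
    obtain ⟨i, x, hxb, hzi⟩ := unpack z hz
    rw [← hzi]
    refine key i x hxb ?_
    intro hTi _ hi0
    exact hT0 (hi0 ▸ hTi)
  · intro hT0 z hz hzw
    obtain ⟨i, x, hxb, hzi⟩ := unpack z hz
    rw [← hzi]
    refine key i x hxb ?_
    intro hTi htop hi0
    apply hzw
    rw [← hzi]
    funext l
    rcases eq_or_ne l i with rfl | hl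
    · rw [Function.update_self, if_pos hi0]
    · rw [Function.update_of_ne hl, if_neg (fun h => hl (h.trans hi0.symm))]
      have h1 := htop l hl
      have h2 : ((Fin.ofNat (k + 1) (s - 1) : Fin (k + 1)) : ℕ) = s - 1 :=
        Nat.mod_eq_of_lt (by omega : s - 1 < k + 1)
      exact Fin.ext (by rw [h1, h2])
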